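/- Let q be a prime power and u ∈ 𝔽_q³ a vector all of whose three coordinates are nonzero, and suppose exactly two distinct values occur among the three coordinates of u. Then |Ẽ(u)| = (q-1)(2q-6). -/

import Mathlib

open Set Pointwise

variable {F : Type*} [Field F]

/-- Hamming distance on `𝔽_q³`. -/
noncomputable def hdist (u v : Fin 3 → F) : ℕ := Set.ncard {i : Fin 3 | u i ≠ v i}

/-- The ball of radius 1 centered at `u`. -/
def ball (u : Fin 3 → F) : Set (Fin 3 → F) := {v | hdist u v ≤ 1}

/-- The extended ball of `u`: the union of the balls centered at scalar multiples of `u`. -/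
def extBall (u : Fin 3 → F) : Set (Fin 3 → F) := ⋃ l : F, ball (l • u)

/-- `D_q`: vectors with pairwise distinct, nonzero coordinates. -/
def Dq : Set (Fin 3 → F) :=
  {u | u 0 ≠ u 1 ∧ u 0 ≠ u 2 ∧ u 1 ≠ u 2 ∧ u 0 ≠ 0 ∧ u 1 ≠ 0 ∧ u 2 ≠ 0}

/-- `B̃(u) = B(u) ∩ D_q`. -/
def ballD (u : Fin 3 → F) : Set (Fin 3 → F) := ball u ∩ Dq

/-- `Ẽ(u) = E(u) ∩ D_q`. -/
def extBallD (u : Fin 3 → F) : Set (Fin 3 → F) := extBall u ∩ Dq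

/-- `H` is a short covering if the extended balls centered at its elements cover the space. -/
def ShortCovering (H : Set (Fin 3 → F)) : Prop := (⋃ h ∈ H, extBall h) = Set.univ

lemma hdist_le_one_iff (u v : Fin 3 → F) :
    hdist u v ≤ 1 ↔
      (u 1 = v 1 ∧ u 2 = v 2) ∨ (u 0 = v 0 ∧ u 2 = v 2) ∨ (u 0 = v 0 ∧ u 1 = v 1) := by
  unfold hdist
  rw [Set.ncard_le_one (Set.toFinite _)]
  constructor
  · intro h
    by_cases h0 : u 0 = v 0 <;> by_cases h1 : u 1 = v 1 <;> by_cases h2 : u 2 = v 2 <;>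
      first
        | tauto
        | exact absurd (h _ h0 _ h1) (by decide)
        | exact absurd (h _ h0 _ h2) (by decide)
        | exact absurd (h _ h1 _ h2) (by decide)
  · rintro (⟨e1, e2⟩ | ⟨e1, e2⟩ | ⟨e1, e2⟩) x hx y hy <;>
      fin_cases x <;> fin_cases y <;> simp_all

lemma smul_vec3 (l a b c : F) : l • ![a, b, c] = ![l * a, l * b, l * c] := by
  funext i; fin_cases i <;> simp

lemma ncard_prod' {α β : Type*} (s : Set α) (t : Set β) :
    (s ×ˢ t).ncard = s.ncard * t.ncard := by
  rw [← Nat.card_coe_set_eq, Nat.card_congr (Equiv.Set.prod s t), Nat.card_prod,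
    Nat.card_coe_set_eq, Nat.card_coe_set_eq]

lemma count_aab (q : ℕ) {F : Type*} [Field F] [Fintype F] (hcard : Fintype.card F = q)
    (a b : F) (ha : a ≠ 0) (hb : b ≠ 0) (hab : a ≠ b) :
    (extBallD ![a, a, b]).ncard = (q - 1) * (2 * q - 6) := by
  classical
  set g : F × F × Bool → (Fin 3 → F) := fun p =>
    if p.2.2 then ![p.1 * a, p.1 * p.2.1, p.1 * b] else ![p.1 * p.2.1, p.1 * a, p.1 * b]
    with hgdef
  set D : Set (F × F × Bool) :=
    {l : F | l ≠ 0} ×ˢ (({0, a, b}ᶜ : Set F) ×ˢ (Set.univ : Set Bool)) with hDdef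
  have hmemD : ∀ p : F × F × Bool, p ∈ D ↔ p.1 ≠ 0 ∧ (p.2.1 ≠ 0 ∧ p.2.1 ≠ a ∧ p.2.1 ≠ b) := by
    intro p
    simp [hDdef, Set.mem_prod]
  have himg : extBallD ![a, a, b] = g '' D := by
    ext v
    constructor
    · rintro ⟨hv1, hv2⟩
      obtain ⟨d1, d2, d3, n0, n1, n2⟩ := hv2
      simp only [extBall, Set.mem_iUnion] at hv1
      obtain ⟨l, hl⟩ := hv1
      rw [ball, Set.mem_setOf_eq, smul_vec3, hdist_le_one_iff] at hl
      simp only [Matrix.cons_val_zero, Matrix.cons_val_one, Matrix.head_cons,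
        Matrix.cons_val_two, Matrix.tail_cons] at hl
      have hl0 : l ≠ 0 := by
        rintro rfl
        rcases hl with ⟨e1, e2⟩ | ⟨e1, e2⟩ | ⟨e1, e2⟩ <;> simp_all
      rcases hl with ⟨e1, e2⟩ | ⟨e1, e2⟩ | ⟨e1, e2⟩
      · refine ⟨(l, l⁻¹ * v 0, false), ?_, ?_⟩
        · rw [hmemD]
          refine ⟨hl0, fun h => n0 ?_, fun h => d1 ?_, fun h => d2 ?_⟩
          · field_simp at h; simpa using h
          · have : v 0 = l * a := by field_simp at h; linear_combination h
            rw [this, e1]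
          · have : v 0 = l * b := by field_simp at h; linear_combination h
            rw [this, e2]
        · funext i
          fin_cases i <;> simp [hgdef, ← e1, ← e2, mul_inv_cancel_left₀ hl0]
      · refine ⟨(l, l⁻¹ * v 1, true), ?_, ?_⟩
        · rw [hmemD]
          refine ⟨hl0, fun h => n1 ?_, fun h => ?_, fun h => d3 ?_⟩
          · field_simp at h; simpa using h
          · have : v 1 = l * a := by field_simp at h; linear_combination h
            exact d1 (by rw [this, e1])
          · have : v 1 = l * b := by field_simp at h; linear_combination h
            rw [this, e2]
        · funext i
          fin_cases i <;> simp [hgdef, ← e1, ← e2, mul_inv_cancel_left₀ hl0]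
      · exact absurd (e1.symm.trans e2) d1
    · rintro ⟨⟨l, y, c⟩, hp, rfl⟩
      rw [hmemD] at hp
      obtain ⟨hl, hy0, hya, hyb⟩ := hp
      constructor
      · simp only [extBall, Set.mem_iUnion]
        refine ⟨l, ?_⟩
        rw [ball, Set.mem_setOf_eq, smul_vec3, hdist_le_one_iff]
        cases c <;> simp [hgdef] <;> tauto
      · cases c <;>
          simp only [hgdef, if_true, if_false, Bool.false_eq_true] <;>
          refine ⟨fun h => ?_, fun h => ?_, fun h => ?_, mul_ne_zero hl ?_, mul_ne_zero hl ?_,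
            mul_ne_zero hl ?_⟩ <;>
          simp_all <;>
          first
            | exact hya (mul_left_cancel₀ hl h)
            | exact hyb (mul_left_cancel₀ hl h)
            | exact hab (mul_left_cancel₀ hl h)
  have hinj : Set.InjOn g D := by
    rintro ⟨l, y, c⟩ hp ⟨l', y', c'⟩ hp' hgg
    rw [hmemD] at hp hp'
    obtain ⟨hl, hy0, hya, hyb⟩ := hp
    obtain ⟨hl', hy0', hya', hyb'⟩ := hp'
    have e0 := congrFun hgg 0
    have e1 := congrFun hgg 1
    have e2 := congrFun hgg 2
    cases c <;> cases c' <;>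
      simp only [hgdef, if_true, if_false, Bool.false_eq_true, Matrix.cons_val_zero,
        Matrix.cons_val_one, Matrix.head_cons, Matrix.cons_val_two, Matrix.tail_cons] at e0 e1 e2
    · obtain rfl : l = l' := mul_right_cancel₀ hb e2
      obtain rfl : y = y' := mul_left_cancel₀ hl e0
      rfl
    · obtain rfl : l = l' := mul_right_cancel₀ hb e2
      exact absurd (mul_left_cancel₀ hl e0) hya
    · obtain rfl : l = l' := mul_right_cancel₀ hb e2
      exact absurd (mul_left_cancel₀ hl e0).symm hya'
    · obtain rfl : l = l' := mul_right_cancel₀ hb e2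
      obtain rfl : y = y' := mul_left_cancel₀ hl e1
      rfl
  have hq3 : 3 ≤ q := by
    have h3 : ({0, a, b} : Set F).ncard = 3 := by
      rw [Set.ncard_insert_of_notMem (by simp [Ne, ha.symm, hb.symm]),
        Set.ncard_pair hab]
    calc 3 = ({0, a, b} : Set F).ncard := h3.symm
      _ ≤ (Set.univ : Set F).ncard := Set.ncard_le_ncard (Set.subset_univ _) (Set.toFinite _)
      _ = q := by rw [Set.ncard_univ, Nat.card_eq_fintype_card, hcard]
  have hcompl1 : ({l : F | l ≠ 0}).ncard = q - 1 := by
    have : ({l : F | l ≠ 0}) = ({(0 : F)} : Set F)ᶜ := by ext; simp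
    rw [this]
    have := Set.ncard_add_ncard_compl ({(0 : F)} : Set F) (Set.toFinite _) (Set.toFinite _)
    rw [Set.ncard_singleton, Nat.card_eq_fintype_card, hcard] at this
    omega
  have hcompl3 : (({0, a, b}ᶜ : Set F)).ncard = q - 3 := by
    have := Set.ncard_add_ncard_compl ({0, a, b} : Set F) (Set.toFinite _) (Set.toFinite _)
    rw [Set.ncard_insert_of_notMem (by simp [Ne, ha.symm, hb.symm]),
      Set.ncard_pair hab, Nat.card_eq_fintype_card, hcard] at this
    omega
  have hbool : (Set.univ : Set Bool).ncard = 2 := by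
    rw [Set.ncard_univ, Nat.card_eq_fintype_card]; rfl
  rw [himg, Set.ncard_image_of_injOn hinj, hDdef, ncard_prod', ncard_prod', hcompl1, hcompl3,
    hbool]
  have h26 : (q - 3) * 2 = 2 * q - 6 := by omega
  rw [h26]

lemma hdist_comp (σ : Equiv.Perm (Fin 3)) (u v : Fin 3 → F) :
    hdist (u ∘ σ) (v ∘ σ) = hdist u v := by
  unfold hdist
  have h : {i : Fin 3 | (u ∘ σ) i ≠ (v ∘ σ) i} = σ ⁻¹' {i | u i ≠ v i} := rfl
  rw [h, ← Equiv.image_symm_eq_preimage, Set.ncard_image_of_injective _ σ.symm.injective]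

lemma mem_extBall_comp (σ : Equiv.Perm (Fin 3)) (u v : Fin 3 → F) :
    v ∘ σ ∈ extBall (u ∘ σ) ↔ v ∈ extBall u := by
  simp only [extBall, Set.mem_iUnion, ball, Set.mem_setOf_eq]
  refine exists_congr fun l => ?_
  have h : l • (u ∘ ⇑σ) = (l • u) ∘ ⇑σ := rfl
  rw [h, hdist_comp]

lemma comp_symm_comp (σ : Equiv.Perm (Fin 3)) (w : Fin 3 → F) :
    (w ∘ ⇑σ.symm) ∘ ⇑σ = w := by
  funext i; simp

lemma extBallD_comp_ncard (σ : Equiv.Perm (Fin 3))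
    (hσ : ∀ v : Fin 3 → F, v ∘ ⇑σ ∈ Dq ↔ v ∈ Dq) (u : Fin 3 → F) :
    (extBallD (u ∘ ⇑σ)).ncard = (extBallD u).ncard := by
  have himg : extBallD (u ∘ ⇑σ) = (fun v : Fin 3 → F => v ∘ ⇑σ) '' extBallD u := by
    ext w
    simp only [extBallD, Set.mem_inter_iff, Set.mem_image]
    constructor
    · rintro ⟨h1, h2⟩
      refine ⟨w ∘ ⇑σ.symm, ⟨?_, ?_⟩, comp_symm_comp σ w⟩
      · rw [← mem_extBall_comp σ, comp_symm_comp σ w]; exact h1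
      · rw [← hσ (w ∘ ⇑σ.symm), comp_symm_comp σ w]; exact h2
    · rintro ⟨v, ⟨h1, h2⟩, rfl⟩
      exact ⟨(mem_extBall_comp σ u v).mpr h1, (hσ v).mpr h2⟩
  have hinjc : Function.Injective (fun v : Fin 3 → F => v ∘ ⇑σ) := by
    intro v v' h
    funext i
    have := congrFun h (σ.symm i)
    simpa using this
  rw [himg, Set.ncard_image_of_injective _ hinjc]

lemma dq_swap12 : ∀ v : Fin 3 → F, v ∘ ⇑(Equiv.swap (1 : Fin 3) 2) ∈ Dq ↔ v ∈ Dq := by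
  intro v
  have s0 : (Equiv.swap (1 : Fin 3) 2) 0 = 0 := by decide
  have s1 : (Equiv.swap (1 : Fin 3) 2) 1 = 2 := by decide
  have s2 : (Equiv.swap (1 : Fin 3) 2) 2 = 1 := by decide
  simp only [Dq, Set.mem_setOf_eq, Function.comp_apply, s0, s1, s2]
  constructor <;> rintro ⟨a1, a2, a3, a4, a5, a6⟩ <;> exact ⟨a2, a1, a3.symm, a4, a6, a5⟩

lemma dq_swap02 : ∀ v : Fin 3 → F, v ∘ ⇑(Equiv.swap (0 : Fin 3) 2) ∈ Dq ↔ v ∈ Dq := by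
  intro v
  have s0 : (Equiv.swap (0 : Fin 3) 2) 0 = 2 := by decide
  have s1 : (Equiv.swap (0 : Fin 3) 2) 1 = 1 := by decide
  have s2 : (Equiv.swap (0 : Fin 3) 2) 2 = 0 := by decide
  simp only [Dq, Set.mem_setOf_eq, Function.comp_apply, s0, s1, s2]
  constructor <;> rintro ⟨a1, a2, a3, a4, a5, a6⟩ <;> exact ⟨a3.symm, a2.symm, a1.symm, a6, a5, a4⟩

theorem stmt_6 (q : ℕ) (hq : IsPrimePow q) (F : Type*) [Field F] [Fintype F]
    (hcard : Fintype.card F = q) (u : Fin 3 → F)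
    (h0 : ∀ i : Fin 3, u i ≠ 0)
    (h2 : ({u 0, u 1, u 2} : Set F).ncard = 2) :
    (extBallD u).ncard = (q - 1) * (2 * q - 6) := by
  have hu0 := h0 0
  have hu1 := h0 1
  have hu2 := h0 2
  by_cases h01 : u 0 = u 1
  · by_cases h02 : u 0 = u 2
    · exfalso
      have hs : ({u 0, u 1, u 2} : Set F) = {u 0} := by
        rw [← h01, ← h02]; simp
      rw [hs, Set.ncard_singleton] at h2
      omega
    · have hu : u = ![u 0, u 0, u 2] := by
        funext i; fin_cases i <;> simp [← h01]
      rw [hu]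
      exact count_aab q hcard (u 0) (u 2) hu0 hu2 h02
  · by_cases h02 : u 0 = u 2
    · have s0 : (Equiv.swap (1 : Fin 3) 2) 0 = 0 := by decide
      have s1 : (Equiv.swap (1 : Fin 3) 2) 1 = 2 := by decide
      have s2 : (Equiv.swap (1 : Fin 3) 2) 2 = 1 := by decide
      have hu : u = ![u 0, u 0, u 1] ∘ ⇑(Equiv.swap (1 : Fin 3) 2) := by
        funext i; fin_cases i <;> simp [s0, s1, s2, ← h02]
      rw [hu, extBallD_comp_ncard _ dq_swap12]
      exact count_aab q hcard (u 0) (u 1) hu0 hu1 h01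
    · have h12 : u 1 = u 2 := by
        by_contra h12
        have hs : ({u 0, u 1, u 2} : Set F).ncard = 3 := by
          rw [Set.ncard_insert_of_notMem (by simp [h01, h02]), Set.ncard_pair h12]
        omega
      have s0 : (Equiv.swap (0 : Fin 3) 2) 0 = 2 := by decide
      have s1 : (Equiv.swap (0 : Fin 3) 2) 1 = 1 := by decide
      have s2 : (Equiv.swap (0 : Fin 3) 2) 2 = 0 := by decide
      have hu : u = ![u 1, u 1, u 0] ∘ ⇑(Equiv.swap (0 : Fin 3) 2) := by
        funext i; fin_cases i <;> simp [s0, s1, s2, ← h12]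
      rw [hu, extBallD_comp_ncard _ dq_swap02]
      exact count_aab q hcard (u 1) (u 0) hu1 hu0 (fun h => h01 h.symm)
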